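/- Let d ≥ 1, let D, G > 0, and let U ⊆ ℝ^d be a nonempty closed convex set containing 0 with ‖u − v‖ ≤ D for all u, v ∈ U. Let 0 < η ≤ 1/(5DG). For t = 1,…,T let w_t ∈ U and g_t ∈ ℝ^d with ‖g_t‖ ≤ G, and set M_t = g_t·g_tᵀ. Define the slave iterates by: w_1^η = 0; for t ≥ 1, Σ_{t+1}^η = (D^{−2}·I + 2η²·Σ_{s=1}^t M_s)^{−1} (a positive definite matrix), w̃_{t+1}^η = w_t^η − Σ_{t+1}^η·(η·g_t + 2η²·M_t·(w_t^η − w_t)), and w_{t+1}^η ∈ U is the unique minimizer over u ∈ U of (u − w̃_{t+1}^η)ᵀ·(Σ_{t+1}^η)^{−1}·(u − w̃_{t+1}^η). Define the surrogate loss ℓ_t^η(u) = −η⟨w_t − u, g_t⟩ + η²(⟨u − w_t, g_t⟩)². Then for every u ∈ U: Σ_{t=1}^T ℓ_t^η(w_t^η) ≤ Σ_{t=1}^T ℓ_t^η(u) + ‖u‖²/(2D²) + (1/2)·ln det(I + 2η²D²·Σ_{t=1}^T M_t). -/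

import Mathlib

open Matrix

section mgAux
variable {d : ℕ}

lemma mg_dot_symm (A : Matrix (Fin d) (Fin d) ℝ) (hA : Aᵀ = A) (x y : Fin d → ℝ) :
    x ⬝ᵥ A.mulVec y = y ⬝ᵥ A.mulVec x := by
  rw [dotProduct_mulVec, ← mulVec_transpose, hA, dotProduct_comm]

lemma mg_vmv_mulVec (a b v : Fin d → ℝ) :
    (vecMulVec a b).mulVec v = (b ⬝ᵥ v) • a := by
  funext i
  simp only [vecMulVec_apply, mulVec, dotProduct, Pi.smul_apply, smul_eq_mul, Finset.sum_mul]
  exact Finset.sum_congr rfl fun j _ => by ring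

lemma mg_vmv_psd (g : Fin d → ℝ) : (vecMulVec g g).PosSemidef := by
  have h : vecMulVec g g = (replicateRow Unit g)ᴴ * replicateRow Unit g := by
    rw [vecMulVec_eq Unit]
    congr 1
  rw [h]
  exact posSemidef_conjTranspose_mul_self _

lemma mg_psd_smul {N : Matrix (Fin d) (Fin d) ℝ} (hN : N.PosSemidef) {c : ℝ} (hc : 0 ≤ c) :
    (c • N).PosSemidef := by
  refine PosSemidef.of_dotProduct_mulVec_nonneg ?_ fun x => ?_
  · unfold Matrix.IsHermitian
    rw [conjTranspose_smul, hN.isHermitian]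
    simp
  · rw [smul_mulVec, dotProduct_smul, smul_eq_mul]
    exact mul_nonneg hc (hN.dotProduct_mulVec_nonneg x)

lemma mg_posdef {c : ℝ} (hc : 0 < c) {N : Matrix (Fin d) (Fin d) ℝ} (hN : N.PosSemidef) :
    (c • (1 : Matrix (Fin d) (Fin d) ℝ) + N).PosDef := by
  refine Matrix.PosDef.add_posSemidef (PosDef.of_dotProduct_mulVec_pos ?_ fun x hx => ?_) hN
  · unfold Matrix.IsHermitian
    rw [conjTranspose_smul, conjTranspose_one]
    simp
  · rw [smul_mulVec, one_mulVec, dotProduct_smul, smul_eq_mul]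
    have : (0:ℝ) < star x ⬝ᵥ x := dotProduct_star_self_pos_iff.mpr hx
    exact mul_pos hc this

lemma mg_expand (P : Matrix (Fin d) (Fin d) ℝ) (hP : Pᵀ = P) (x y : Fin d → ℝ) :
    (x + y) ⬝ᵥ P.mulVec (x + y) =
      x ⬝ᵥ P.mulVec x + 2 * (x ⬝ᵥ P.mulVec y) + y ⬝ᵥ P.mulVec y := by
  rw [mulVec_add, dotProduct_add, add_dotProduct, add_dotProduct,
    mg_dot_symm P hP y x]
  ring

lemma mg_logdet (A : Matrix (Fin d) (Fin d) ℝ) (hA : A.PosDef) (x : Fin d → ℝ) :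
    x ⬝ᵥ (A + vecMulVec x x)⁻¹.mulVec x ≤
      Real.log (A + vecMulVec x x).det - Real.log A.det := by
  have hB : (A + vecMulVec x x).PosDef := hA.add_posSemidef (mg_vmv_psd x)
  have hAdet : 0 < A.det := hA.det_pos
  have hAu : IsUnit A.det := isUnit_iff_ne_zero.mpr (ne_of_gt hAdet)
  have hBdet : 0 < (A + vecMulVec x x).det := hB.det_pos
  have hBu : IsUnit (A + vecMulVec x x).det := isUnit_iff_ne_zero.mpr (ne_of_gt hBdet)
  set q : ℝ := x ⬝ᵥ A⁻¹.mulVec x with hqdef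
  have hq : 0 ≤ q := by
    have := hA.inv.posSemidef.dotProduct_mulVec_nonneg x
    rwa [star_trivial] at this
  have h1q : 0 < 1 + q := by linarith
  -- determinant identity
  have hentry : (replicateRow Unit x * A⁻¹ * replicateCol Unit x) () () = q := by
    simp only [Matrix.mul_apply, Matrix.replicateRow_apply, Matrix.replicateCol_apply, Finset.sum_mul]
    rw [hqdef]
    simp only [dotProduct, mulVec, Finset.mul_sum]
    rw [Finset.sum_comm]
    exact Finset.sum_congr rfl fun i _ => Finset.sum_congr rfl fun j _ => by ring
  have hdet : (A + vecMulVec x x).det = A.det * (1 + q) := by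
    rw [vecMulVec_eq Unit, det_add_replicateCol_mul_replicateRow hAu]
    congr 1
    rw [det_unique]
    simp only [Pi.add_apply, Matrix.one_apply_eq, Matrix.add_apply]
    rw [hentry]
  -- Sherman-Morrison
  set y : Fin d → ℝ := (1 + q)⁻¹ • A⁻¹.mulVec x with hydef
  have hxy : x ⬝ᵥ y = (1 + q)⁻¹ * q := by
    rw [hydef, dotProduct_smul, smul_eq_mul, hqdef]
  have hBy : (A + vecMulVec x x).mulVec y = x := by
    rw [add_mulVec, hydef, mulVec_smul, mulVec_mulVec, mul_nonsing_inv _ hAu, one_mulVec,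
      mg_vmv_mulVec, hxy]
    rw [← add_smul]
    have : (1 + q)⁻¹ + (1 + q)⁻¹ * q = 1 := by
      field_simp
    rw [this, one_smul]
  have hBinvx : (A + vecMulVec x x)⁻¹.mulVec x = y := by
    have h2 : (A + vecMulVec x x)⁻¹.mulVec ((A + vecMulVec x x).mulVec y) = y := by
      rw [mulVec_mulVec, nonsing_inv_mul _ hBu, one_mulVec]
    rwa [hBy] at h2
  rw [hBinvx, hxy, hdet, Real.log_mul (ne_of_gt hAdet) (ne_of_gt h1q)]
  have hlog : Real.log (1 + q)⁻¹ ≤ (1 + q)⁻¹ - 1 :=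
    Real.log_le_sub_one_of_pos (inv_pos.mpr h1q)
  rw [Real.log_inv] at hlog
  have hexp : (1 + q)⁻¹ * q = 1 - (1 + q)⁻¹ := by
    field_simp
    ring
  linarith

lemma mg_proj (P : Matrix (Fin d) (Fin d) ℝ) (hP : P.PosSemidef) (hPs : Pᵀ = P)
    {U : Set (Fin d → ℝ)} (hU : Convex ℝ U) {p z u : Fin d → ℝ} (hp : p ∈ U) (hu : u ∈ U)
    (hmin : ∀ v ∈ U, (p - z) ⬝ᵥ P.mulVec (p - z) ≤ (v - z) ⬝ᵥ P.mulVec (v - z)) :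
    (p - u) ⬝ᵥ P.mulVec (p - u) ≤ (z - u) ⬝ᵥ P.mulVec (z - u) := by
  have hQ : ∀ v : Fin d → ℝ, 0 ≤ v ⬝ᵥ P.mulVec v := fun v => by
    have := hP.dotProduct_mulVec_nonneg v; rwa [star_trivial] at this
  set B : ℝ := (p - z) ⬝ᵥ P.mulVec (u - p) with hBdef
  set C : ℝ := (u - p) ⬝ᵥ P.mulVec (u - p) with hCdef
  have hC : 0 ≤ C := hQ _
  have hstep : ∀ lam : ℝ, 0 < lam → lam ≤ 1 → 0 ≤ 2 * B + lam * C := by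
    intro lam h0 h1
    have hvU : p + lam • (u - p) ∈ U := by
      have h' := hU hp hu (by linarith : (0:ℝ) ≤ 1 - lam) (le_of_lt h0) (by ring)
      have heq : (1 - lam) • p + lam • u = p + lam • (u - p) := by
        rw [smul_sub, sub_smul, one_smul]; abel
      rwa [heq] at h'
    have hmin' := hmin _ hvU
    have hveq : p + lam • (u - p) - z = (p - z) + lam • (u - p) := by abel
    rw [hveq, mg_expand P hPs] at hmin'
    have e1 : (p - z) ⬝ᵥ P.mulVec (lam • (u - p)) = lam * B := by
      rw [mulVec_smul, dotProduct_smul, smul_eq_mul, hBdef]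
    have e2 : (lam • (u - p)) ⬝ᵥ P.mulVec (lam • (u - p)) = lam * (lam * C) := by
      rw [mulVec_smul, dotProduct_smul, smul_dotProduct, smul_eq_mul, smul_eq_mul, hCdef]
    rw [e1, e2] at hmin'
    have h2 : 0 ≤ lam * (2 * B + lam * C) := by nlinarith
    exact (mul_nonneg_iff_of_pos_left h0).mp h2
  have key : 0 ≤ B := by
    by_contra hcon
    push_neg at hcon
    set lam : ℝ := min 1 ((-(2 * B)) / (C + 1)) with hlamdef
    have hdpos : 0 < (-(2 * B)) / (C + 1) := div_pos (by linarith) (by linarith)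
    have h0 : 0 < lam := lt_min one_pos hdpos
    have h1 : lam ≤ 1 := min_le_left _ _
    have h2 : lam ≤ (-(2 * B)) / (C + 1) := min_le_right _ _
    have h3 : lam * (C + 1) ≤ -(2 * B) := (le_div_iff₀ (by linarith)).mp h2
    have h4 := hstep lam h0 h1
    nlinarith
  have hexp := mg_expand P hPs (z - p) (p - u)
  have hveq : (z - p) + (p - u) = z - u := by abel
  rw [hveq] at hexp
  have hflip : (z - p) ⬝ᵥ P.mulVec (p - u) = B := by
    rw [show z - p = -(p - z) by abel, show p - u = -(u - p) by abel,
      mulVec_neg, dotProduct_neg, neg_dotProduct, neg_neg, hBdef]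
  rw [hflip] at hexp
  have := hQ (z - p)
  linarith

end mgAux

set_option maxHeartbeats 1600000 in
/-- Lemma 5 of the paper (Surrogate regret bound, full version): the MetaGrad Slave with
learning rate `0 < η ≤ 1/(5DG)` satisfies, for every `u ∈ U`,
`Σ_t ℓ_t^η(w_t^η) ≤ Σ_t ℓ_t^η(u) + ‖u‖²/(2D²) + ½·ln det(I + 2η²D²·Σ_t M_t)`.
Here `ℝ^d` is modelled as `Fin d → ℝ` with the explicit Euclidean norm. -/
theorem stmt_8 {d T : ℕ} (hd : 1 ≤ d)
    (D G η : ℝ) (hD : 0 < D) (hG : 0 < G) (hη : 0 < η) (hη' : η ≤ 1 / (5 * D * G))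
    (U : Set (Fin d → ℝ)) (hUne : U.Nonempty) (hUclosed : IsClosed U) (hUconv : Convex ℝ U)
    (hU0 : (0 : Fin d → ℝ) ∈ U)
    (hdiam : ∀ u ∈ U, ∀ v ∈ U, Real.sqrt (∑ i, (u i - v i) ^ 2) ≤ D)
    -- master points and gradients for rounds 1,…,T
    (w : ℕ → Fin d → ℝ) (hw : ∀ t, 1 ≤ t → t ≤ T → w t ∈ U)
    (g : ℕ → Fin d → ℝ) (hg : ∀ t, 1 ≤ t → t ≤ T → Real.sqrt (∑ i, (g t i) ^ 2) ≤ G)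
    -- the rank-one matrices M_t = g_t g_tᵀ
    (M : ℕ → Matrix (Fin d) (Fin d) ℝ)
    (hM : ∀ t, M t = Matrix.of fun i j => g t i * g t j)
    -- the slave's covariance matrices Σ_{t+1}^η = (D⁻²·I + 2η²·Σ_{s≤t} M_s)⁻¹
    (S : ℕ → Matrix (Fin d) (Fin d) ℝ)
    (hS : ∀ t, 1 ≤ t → S (t + 1) =
      ((D ^ 2)⁻¹ • (1 : Matrix (Fin d) (Fin d) ℝ) + (2 * η ^ 2) • ∑ s ∈ Finset.Icc 1 t, M s)⁻¹)
    -- the slave iterates: w_1^η = 0, unprojected update w̃, projection onto U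
    (wη wtil : ℕ → Fin d → ℝ) (hwη1 : wη 1 = 0)
    (hwtil : ∀ t, 1 ≤ t → t ≤ T → wtil (t + 1) =
      wη t - (S (t + 1)).mulVec (η • g t + (2 * η ^ 2) • (M t).mulVec (wη t - w t)))
    (hproj : ∀ t, 1 ≤ t → t ≤ T → wη (t + 1) ∈ U ∧ ∀ u ∈ U,
      (wη (t + 1) - wtil (t + 1)) ⬝ᵥ (S (t + 1))⁻¹.mulVec (wη (t + 1) - wtil (t + 1)) ≤
        (u - wtil (t + 1)) ⬝ᵥ (S (t + 1))⁻¹.mulVec (u - wtil (t + 1)))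
    -- the surrogate loss ℓ_t^η(u) = −η⟨w_t − u, g_t⟩ + η²⟨u − w_t, g_t⟩²
    (ℓ : ℕ → (Fin d → ℝ) → ℝ)
    (hℓ : ∀ t u, ℓ t u = -η * ((w t - u) ⬝ᵥ g t) + η ^ 2 * ((u - w t) ⬝ᵥ g t) ^ 2) :
    ∀ u ∈ U,
      ∑ t ∈ Finset.Icc 1 T, ℓ t (wη t) ≤
        ∑ t ∈ Finset.Icc 1 T, ℓ t u + (∑ i, (u i) ^ 2) / (2 * D ^ 2) +
          (1 / 2) * Real.log
            (Matrix.det (1 + (2 * η ^ 2 * D ^ 2) • ∑ t ∈ Finset.Icc 1 T, M t)) := by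
  intro u hu
  set P : ℕ → Matrix (Fin d) (Fin d) ℝ := fun t =>
    (D ^ 2)⁻¹ • (1 : Matrix (Fin d) (Fin d) ℝ) + (2 * η ^ 2) • ∑ s ∈ Finset.Icc 1 t, M s
    with hPdef
  have hD2 : (0:ℝ) < (D ^ 2)⁻¹ := by positivity
  have hMdef : ∀ s, M s = vecMulVec (g s) (g s) := fun s => by rw [hM]; rfl
  have hMsymm : ∀ s, (M s)ᵀ = M s := fun s => by
    rw [hMdef]
    ext i j
    simp only [transpose_apply, vecMulVec_apply]
    ring
  have hsum_psd : ∀ t, (∑ s ∈ Finset.Icc 1 t, M s).PosSemidef := by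
    intro t
    refine Finset.sum_induction M Matrix.PosSemidef
      (fun _ _ ha hb => ha.add hb) Matrix.PosSemidef.zero (fun s _ => ?_)
    rw [hMdef]; exact mg_vmv_psd _
  have hPpd : ∀ t, (P t).PosDef := fun t =>
    mg_posdef hD2 (mg_psd_smul (hsum_psd t) (by positivity))
  have hPsymm : ∀ t, (P t)ᵀ = P t := by
    intro t
    rw [hPdef]
    simp only [transpose_add, transpose_smul, transpose_one]
    congr 1
    rw [Matrix.transpose_sum]
    exact congrArg _ (Finset.sum_congr rfl fun s _ => hMsymm s)
  have hPdet : ∀ t, 0 < (P t).det := fun t => (hPpd t).det_pos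
  have hPu : ∀ t, IsUnit (P t).det := fun t => isUnit_iff_ne_zero.mpr (ne_of_gt (hPdet t))
  have hPinv_symm : ∀ t, ((P t)⁻¹)ᵀ = (P t)⁻¹ := fun t => by
    rw [transpose_nonsing_inv, hPsymm]
  have hSeq : ∀ t, 1 ≤ t → S (t + 1) = (P t)⁻¹ := fun t ht => by rw [hS t ht, hPdef]
  have hSinv : ∀ t, 1 ≤ t → (S (t + 1))⁻¹ = P t := fun t ht => by
    rw [hSeq t ht, nonsing_inv_nonsing_inv _ (hPu t)]
  have hwηU : ∀ t, 1 ≤ t → t ≤ T + 1 → wη t ∈ U := by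
    intro t ht hT
    match t, ht, hT with
    | 1, _, _ => rw [hwη1]; exact hU0
    | (s+2), _, hT => exact (hproj (s+1) (by omega) (by omega)).1
  have hstep : ∀ i, P (i + 1) = P i + (2 * η ^ 2) • M (i + 1) := by
    intro i
    rw [hPdef]
    simp only
    rw [Finset.sum_Icc_succ_top (Nat.le_add_left 1 i), smul_add, add_assoc]
  have hQnn : ∀ t (v : Fin d → ℝ), 0 ≤ v ⬝ᵥ (P t).mulVec v := fun t v => by
    have := (hPpd t).posSemidef.dotProduct_mulVec_nonneg v; rwa [star_trivial] at this
  clear_value P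
  -- Cauchy–Schwarz bound on the gradient coefficient
  have hcsq : ∀ t, 1 ≤ t → t ≤ T →
      (η + 2 * η ^ 2 * (g t ⬝ᵥ (wη t - w t))) ^ 2 ≤ 2 * η ^ 2 := by
    intro t ht1 htT
    set a : ℝ := g t ⬝ᵥ (wη t - w t) with hadef
    have hcs : a ^ 2 ≤ (∑ i, (g t i) ^ 2) * ∑ i, ((wη t - w t) i) ^ 2 := by
      rw [hadef, dotProduct]
      exact Finset.sum_mul_sq_le_sq_mul_sq _ _ _
    have hg2 : (∑ i, (g t i) ^ 2) ≤ G ^ 2 := by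
      have h0 : (0:ℝ) ≤ ∑ i, (g t i) ^ 2 := by positivity
      have := hg t ht1 htT
      nlinarith [Real.sq_sqrt h0, Real.sqrt_nonneg (∑ i, (g t i) ^ 2)]
    have hv2 : (∑ i, ((wη t - w t) i) ^ 2) ≤ D ^ 2 := by
      have hmem := hwηU t ht1 (by omega)
      have hdd := hdiam (wη t) hmem (w t) (hw t ht1 htT)
      simp only [Pi.sub_apply]
      have h0 : (0:ℝ) ≤ ∑ i, (wη t i - w t i) ^ 2 := by positivity
      nlinarith [Real.sq_sqrt h0, Real.sqrt_nonneg (∑ i, (wη t i - w t i) ^ 2), hdd, hD.le]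
    have ha2 : a ^ 2 ≤ G ^ 2 * D ^ 2 := by
      calc a ^ 2 ≤ (∑ i, (g t i) ^ 2) * ∑ i, ((wη t - w t) i) ^ 2 := hcs
        _ ≤ G ^ 2 * D ^ 2 := by
          apply mul_le_mul hg2 hv2 (by positivity)
          positivity
    have hη5 : η * (5 * D * G) ≤ 1 := by
      rw [le_div_iff₀ (by positivity)] at hη'
      linarith
    have hx2 : (η * a) ^ 2 ≤ (1/5) ^ 2 := by
      have h1 : η ^ 2 * a ^ 2 ≤ η ^ 2 * (G ^ 2 * D ^ 2) :=
        mul_le_mul_of_nonneg_left ha2 (sq_nonneg η)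
      have h2 : (η * (5 * D * G)) ^ 2 ≤ 1 := by
        nlinarith [mul_pos (mul_pos hη hD) hG]
      nlinarith [h1, h2]
    have hx : η * a ≤ 1/5 := by nlinarith [hx2]
    nlinarith [hx2, hx, sq_nonneg η, hη]
  -- the potential function
  set φ : ℕ → ℝ := fun t =>
    ((wη (t + 1) - u) ⬝ᵥ (P t).mulVec (wη (t + 1) - u)) / 2 - Real.log (P t).det / 2 with hφdef
  clear_value φ
  -- per-round inequality
  have hround : ∀ i, i < T →
      ℓ (i + 1) (wη (i + 1)) - ℓ (i + 1) u ≤ φ i - φ (i + 1) := by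
    intro i hi
    set t := i + 1 with htdef
    have ht1 : 1 ≤ t := Nat.le_add_left 1 i
    have htT : t ≤ T := hi
    set a : ℝ := g t ⬝ᵥ (wη t - w t) with hadef
    set b : ℝ := g t ⬝ᵥ (u - w t) with hbdef
    set c : ℝ := η + 2 * η ^ 2 * a with hcdef
    set R : ℝ := g t ⬝ᵥ (P t)⁻¹.mulVec (g t) with hRdef
    have hgwu : g t ⬝ᵥ (wη t - u) = a - b := by
      have hv : wη t - u = (wη t - w t) - (u - w t) := by abel
      rw [hv, dotProduct_sub]
    -- (1) the loss difference
    have hldiff : ℓ t (wη t) - ℓ t u = c * (a - b) - η ^ 2 * (a - b) ^ 2 := by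
      rw [hℓ, hℓ]
      have e1 : (w t - wη t) ⬝ᵥ g t = -a := by
        rw [show w t - wη t = -(wη t - w t) by abel, neg_dotProduct, dotProduct_comm, hadef]
      have e2 : (wη t - w t) ⬝ᵥ g t = a := by rw [dotProduct_comm, hadef]
      have e3 : (w t - u) ⬝ᵥ g t = -b := by
        rw [show w t - u = -(u - w t) by abel, neg_dotProduct, dotProduct_comm, hbdef]
      have e4 : (u - w t) ⬝ᵥ g t = b := by rw [dotProduct_comm, hbdef]
      rw [e1, e2, e3, e4, hcdef]
      ring
    -- (2) gradient form
    have hgrad : η • g t + (2 * η ^ 2) • (M t).mulVec (wη t - w t) = c • g t := by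
      rw [hMdef, mg_vmv_mulVec, smul_smul, ← add_smul, ← hadef, hcdef]
    -- (3) the unprojected iterate
    have hwt : wtil (t + 1) = wη t - (P t)⁻¹.mulVec (c • g t) := by
      rw [hwtil t ht1 htT, hgrad, hSeq t ht1]
    -- (4) quadratic expansion
    have hexp : (wtil (t + 1) - u) ⬝ᵥ (P t).mulVec (wtil (t + 1) - u) =
        (wη t - u) ⬝ᵥ (P t).mulVec (wη t - u) - 2 * (c * (a - b)) + c ^ 2 * R := by
      rw [hwt]
      have hsplit : wη t - (P t)⁻¹.mulVec (c • g t) - u =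
          (wη t - u) + (-((P t)⁻¹.mulVec (c • g t))) := by abel
      rw [hsplit, mg_expand _ (hPsymm t)]
      have hPPinv : (P t).mulVec ((P t)⁻¹.mulVec (c • g t)) = c • g t := by
        rw [mulVec_mulVec, mul_nonsing_inv _ (hPu t), one_mulVec]
      have ecross : (wη t - u) ⬝ᵥ (P t).mulVec (-((P t)⁻¹.mulVec (c • g t))) =
          -(c * (a - b)) := by
        rw [mulVec_neg, dotProduct_neg, hPPinv, dotProduct_smul, smul_eq_mul,
          dotProduct_comm, hgwu]
      have elast : (-((P t)⁻¹.mulVec (c • g t))) ⬝ᵥ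
          (P t).mulVec (-((P t)⁻¹.mulVec (c • g t))) = c ^ 2 * R := by
        rw [mulVec_neg, neg_dotProduct, dotProduct_neg, neg_neg, hPPinv, dotProduct_comm,
          smul_dotProduct, mulVec_smul, dotProduct_smul, smul_eq_mul, smul_eq_mul, ← hRdef]
        ring
      rw [ecross, elast]
      ring
    -- (5) projection
    have hproj' : (wη (t + 1) - u) ⬝ᵥ (P t).mulVec (wη (t + 1) - u) ≤
        (wtil (t + 1) - u) ⬝ᵥ (P t).mulVec (wtil (t + 1) - u) := by
      refine mg_proj (P t) (hPpd t).posSemidef (hPsymm t) hUconv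
        (hproj t ht1 htT).1 hu ?_
      intro v hv
      have := (hproj t ht1 htT).2 v hv
      rwa [hSinv t ht1] at this
    -- (6) step relation for the quadratic form
    have hPt : (wη t - u) ⬝ᵥ (P t).mulVec (wη t - u) =
        (wη t - u) ⬝ᵥ (P i).mulVec (wη t - u) + 2 * η ^ 2 * (a - b) ^ 2 := by
      rw [show P t = P i + (2 * η ^ 2) • M t from hstep i]
      rw [add_mulVec, dotProduct_add, smul_mulVec, dotProduct_smul, smul_eq_mul]
      rw [hMdef, mg_vmv_mulVec, hgwu, dotProduct_smul, smul_eq_mul]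
      have e5 : (wη t - u) ⬝ᵥ g t = a - b := by rw [dotProduct_comm]; exact hgwu
      rw [e5]
      ring
    -- (7) nonnegativity of R
    have hR : 0 ≤ R := by
      have := (hPpd t).inv.posSemidef.dotProduct_mulVec_nonneg (g t)
      rwa [star_trivial] at this
    -- (8) the coefficient bound
    have hc2 : c ^ 2 ≤ 2 * η ^ 2 := hcsq t ht1 htT
    -- (9) log-det step
    have hlog : 2 * η ^ 2 * R ≤ Real.log (P t).det - Real.log (P i).det := by
      set x : Fin d → ℝ := (Real.sqrt 2 * η) • g t with hxdef
      have h2 : Real.sqrt 2 * Real.sqrt 2 = 2 := Real.mul_self_sqrt (by norm_num)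
      have hxx : vecMulVec x x = (2 * η ^ 2) • M t := by
        rw [hMdef]
        ext i' j'
        simp only [vecMulVec_apply, hxdef, Pi.smul_apply, smul_eq_mul, Matrix.smul_apply,
          Matrix.of_apply]
        linear_combination η ^ 2 * g t i' * g t j' * h2
      have hPi : P t = P i + vecMulVec x x := by rw [hxx]; exact hstep i
      have hld := mg_logdet (P i) (hPpd i) x
      rw [← hPi] at hld
      have hxq : x ⬝ᵥ (P t)⁻¹.mulVec x = 2 * η ^ 2 * R := by
        rw [hxdef, smul_dotProduct, mulVec_smul, dotProduct_smul, smul_eq_mul, smul_eq_mul,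
          ← hRdef]
        linear_combination η ^ 2 * R * h2
      rw [hxq] at hld
      exact hld
    have hc2R : c ^ 2 * R ≤ 2 * η ^ 2 * R := mul_le_mul_of_nonneg_right hc2 hR
    -- combine
    rw [hldiff, hφdef]
    simp only
    rw [← htdef]
    clear_value a b c R
    have hA : c * (a - b) ≤
        ((wη t - u) ⬝ᵥ (P t).mulVec (wη t - u)
          - (wη (t + 1) - u) ⬝ᵥ (P t).mulVec (wη (t + 1) - u)) / 2 + (2 * η ^ 2 * R) / 2 := by
      linarith [hproj', hexp, hc2R]
    linarith [hA, hPt, hlog]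
  -- telescoping
  have hsum : ∑ t ∈ Finset.Icc 1 T, (ℓ t (wη t) - ℓ t u) ≤ φ 0 - φ T := by
    have h1 : ∑ t ∈ Finset.Icc 1 T, (ℓ t (wη t) - ℓ t u)
        = ∑ i ∈ Finset.range T, (ℓ (i + 1) (wη (i + 1)) - ℓ (i + 1) u) := by
      rw [← Finset.Ico_add_one_right_eq_Icc, Finset.sum_Ico_eq_sum_range]
      simp only [Nat.add_sub_cancel, Nat.succ_sub_one]
      exact Finset.sum_congr rfl fun i _ => by rw [Nat.add_comm 1 i]
    rw [h1]
    calc ∑ i ∈ Finset.range T, (ℓ (i + 1) (wη (i + 1)) - ℓ (i + 1) u)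
        ≤ ∑ i ∈ Finset.range T, (φ i - φ (i + 1)) :=
          Finset.sum_le_sum fun i hi => hround i (Finset.mem_range.mp hi)
      _ = φ 0 - φ T := Finset.sum_range_sub' φ T
  -- the initial potential
  have hP0 : P 0 = (D ^ 2)⁻¹ • (1 : Matrix (Fin d) (Fin d) ℝ) := by
    rw [hPdef]
    simp only
    rw [Finset.Icc_eq_empty (by omega), Finset.sum_empty, smul_zero, add_zero]
  have hφ0 : φ 0 = (∑ i, u i ^ 2) / (2 * D ^ 2) - Real.log (((D ^ 2)⁻¹) ^ d) / 2 := by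
    rw [hφdef]
    simp only
    have e1 : wη (0 + 1) - u = -u := by
      rw [show (0 + 1 : ℕ) = 1 from rfl, hwη1]
      exact zero_sub u
    have e2 : u ⬝ᵥ u = ∑ i, u i ^ 2 := by
      simp only [dotProduct]
      exact Finset.sum_congr rfl fun i _ => (pow_two (u i)).symm
    have e3 : (P 0).det = ((D ^ 2)⁻¹) ^ d := by
      rw [hP0, det_smul, det_one, mul_one, Fintype.card_fin]
    rw [e1, e3, hP0, smul_mulVec, one_mulVec, dotProduct_smul, smul_eq_mul,
      neg_dotProduct, dotProduct_neg, neg_neg, e2]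
    have : (0:ℝ) < D ^ 2 := by positivity
    field_simp
  -- the final potential is bounded below
  have hφT : -(Real.log (P T).det) / 2 ≤ φ T := by
    rw [hφdef]
    simp only
    have := hQnn T (wη (T + 1) - u)
    linarith
  -- determinant bookkeeping
  have hD2ne : (D ^ 2 : ℝ) ≠ 0 := by positivity
  have hdetsc : (1 + (2 * η ^ 2 * D ^ 2) • ∑ t ∈ Finset.Icc 1 T, M t) = (D ^ 2) • P T := by
    rw [hPdef]
    simp only
    rw [smul_add, smul_smul, smul_smul, mul_inv_cancel₀ hD2ne, one_smul,
      show (D ^ 2) * (2 * η ^ 2) = 2 * η ^ 2 * D ^ 2 by ring]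
  have hdet_eq : ((D ^ 2) • P T).det = (D ^ 2) ^ d * (P T).det := by
    rw [det_smul, Fintype.card_fin]
  have hlogs : Real.log (((D ^ 2) • P T).det) = (d : ℝ) * Real.log (D ^ 2) + Real.log (P T).det := by
    rw [hdet_eq, Real.log_mul (by positivity) (ne_of_gt (hPdet T)), Real.log_pow]
  have hlog0 : Real.log (((D ^ 2)⁻¹) ^ d) = -((d : ℝ) * Real.log (D ^ 2)) := by
    rw [Real.log_pow, Real.log_inv]
    ring
  rw [Finset.sum_sub_distrib] at hsum
  rw [hdetsc, hlogs]
  rw [hφ0, hlog0] at hsum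
  linarith [hsum, hφT]
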